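/- Let Σ be a symmetric positive-definite real n×n matrix, let I ⊆ {1, …, n} be a nonempty subset of coordinates, let Σ_{II} denote the principal submatrix of Σ with rows and columns indexed by I, and for x ∈ ℝⁿ let x_I denote the corresponding subvector. Then for every x ∈ ℝⁿ, x_Iᵀ (Σ_{II})⁻¹ x_I ≤ xᵀ Σ⁻¹ x; i.e., the squared Mahalanobis distance is non-increasing under marginalization to a subset of variables. -/

import Mathlib

open Matrix


private lemma ext_dot {n : ℕ} {I : Finset (Fin n)} (v : {i // i ∈ I} → ℝ) (u : Fin n → ℝ) :
    (fun j => if h : j ∈ I then v ⟨j, h⟩ else 0) ⬝ᵥ u = v ⬝ᵥ (fun i => u i.val) := by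
  unfold dotProduct
  rw [← Finset.sum_subset (Finset.subset_univ I)
    (by intro j _ hj; simp [dif_neg hj])]
  rw [Finset.sum_subtype I (fun j => Iff.rfl) (fun j => (if h : j ∈ I then v ⟨j, h⟩ else 0) * u j)]
  apply Finset.sum_congr rfl
  intro i _
  simp

private lemma sym_dot {n : ℕ} {M : Matrix (Fin n) (Fin n) ℝ} (hM : Mᵀ = M)
    (a b : Fin n → ℝ) : a ⬝ᵥ (M *ᵥ b) = b ⬝ᵥ (M *ᵥ a) := by
  rw [dotProduct_mulVec, ← mulVec_transpose, hM, dotProduct_comm]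

private lemma key_ineq {n : ℕ} (S : Matrix (Fin n) (Fin n) ℝ) (hpd : S.PosDef)
    (x w : Fin n → ℝ) :
    2 * (x ⬝ᵥ w) - w ⬝ᵥ (S *ᵥ w) ≤ x ⬝ᵥ S⁻¹ *ᵥ x := by
  have hsym : Sᵀ = S := hpd.1
  have hmul : S * S⁻¹ = 1 := mul_nonsing_inv _ hpd.det_pos.ne'.isUnit
  have hSx : S *ᵥ (S⁻¹ *ᵥ x) = x := by
    rw [mulVec_mulVec, hmul, one_mulVec]
  have h0 : 0 ≤ (w - S⁻¹ *ᵥ x) ⬝ᵥ (S *ᵥ (w - S⁻¹ *ᵥ x)) := by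
    simpa using hpd.posSemidef.dotProduct_mulVec_nonneg (w - S⁻¹ *ᵥ x)
  have hexp : (w - S⁻¹ *ᵥ x) ⬝ᵥ (S *ᵥ (w - S⁻¹ *ᵥ x))
      = w ⬝ᵥ (S *ᵥ w) - 2 * (x ⬝ᵥ w) + x ⬝ᵥ S⁻¹ *ᵥ x := by
    rw [mulVec_sub, dotProduct_sub, sub_dotProduct, sub_dotProduct,
      sym_dot hsym (S⁻¹ *ᵥ x) w, hSx]
    have h1 : w ⬝ᵥ x = x ⬝ᵥ w := dotProduct_comm _ _
    have h2 : (S⁻¹ *ᵥ x) ⬝ᵥ x = x ⬝ᵥ S⁻¹ *ᵥ x := dotProduct_comm _ _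
    rw [h1, h2]
    ring
  linarith


private lemma ext_quad {n : ℕ} {I : Finset (Fin n)} (S : Matrix (Fin n) (Fin n) ℝ)
    (v : {i // i ∈ I} → ℝ) :
    (fun j => if h : j ∈ I then v ⟨j, h⟩ else 0) ⬝ᵥ
      (S *ᵥ fun j => if h : j ∈ I then v ⟨j, h⟩ else 0)
    = v ⬝ᵥ ((S.submatrix (fun i : {i // i ∈ I} => i.val)
        (fun i : {i // i ∈ I} => i.val)) *ᵥ v) := by
  rw [ext_dot]
  congr 1
  funext i
  show (S *ᵥ _) i.val = _
  rw [mulVec, mulVec]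
  show (S i.val) ⬝ᵥ _ = _
  rw [dotProduct_comm, ext_dot, dotProduct_comm]
  rfl

private lemma submatrix_posDef {n : ℕ} {S : Matrix (Fin n) (Fin n) ℝ} (hpd : S.PosDef)
    (I : Finset (Fin n)) :
    (S.submatrix (fun i : {i // i ∈ I} => i.val) (fun i : {i // i ∈ I} => i.val)).PosDef := by
  refine PosDef.of_dotProduct_mulVec_pos (hpd.1.submatrix _) (fun v hv => ?_)
  set w : Fin n → ℝ := fun j => if h : j ∈ I then v ⟨j, h⟩ else 0 with hw
  have hw0 : w ≠ 0 := by
    obtain ⟨i, hi⟩ := Function.ne_iff.1 hv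
    intro h
    apply hi
    have := congrFun h i.val
    simpa [hw] using this
  have := hpd.dotProduct_mulVec_pos hw0
  rw [star_trivial] at this ⊢
  rwa [← ext_quad S v]


/-- The squared Mahalanobis distance is non-increasing under
marginalization: for a symmetric positive-definite `Σ` and a nonempty subset `I` of
coordinates, `x_Iᵀ (Σ_{II})⁻¹ x_I ≤ xᵀ Σ⁻¹ x` for every `x`. -/
theorem mahalanobis_nonincreasing_under_marginalization
    (n : ℕ) (Sig : Matrix (Fin n) (Fin n) ℝ) (hpd : Sig.PosDef)
    (I : Finset (Fin n)) (hI : I.Nonempty) (x : Fin n → ℝ) :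
    (fun i : {i // i ∈ I} => x i.val) ⬝ᵥ
        (Sig.submatrix (fun i : {i // i ∈ I} => i.val)
          (fun i : {i // i ∈ I} => i.val))⁻¹.mulVec (fun i : {i // i ∈ I} => x i.val)
      ≤ x ⬝ᵥ Sig⁻¹.mulVec x := by
  set A := Sig.submatrix (fun i : {i // i ∈ I} => i.val) (fun i : {i // i ∈ I} => i.val) with hA
  have hApd : A.PosDef := submatrix_posDef hpd I
  set xf : {i // i ∈ I} → ℝ := fun i => x i.val with hxf
  set z : {i // i ∈ I} → ℝ := A⁻¹ *ᵥ xf with hz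
  set w : Fin n → ℝ := fun j => if h : j ∈ I then z ⟨j, h⟩ else 0 with hw
  have hAz : A *ᵥ z = xf := by
    rw [hz, mulVec_mulVec, mul_nonsing_inv _ hApd.det_pos.ne'.isUnit, one_mulVec]
  have h1 : x ⬝ᵥ w = xf ⬝ᵥ z := by
    rw [dotProduct_comm, hw, ext_dot, dotProduct_comm]
  have h2 : w ⬝ᵥ (Sig *ᵥ w) = xf ⬝ᵥ z := by
    rw [hw, ext_quad, ← hA, hAz, dotProduct_comm]
  calc xf ⬝ᵥ A⁻¹ *ᵥ xf = 2 * (x ⬝ᵥ w) - w ⬝ᵥ (Sig *ᵥ w) := by rw [h1, h2, ← hz]; ring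
    _ ≤ x ⬝ᵥ Sig⁻¹ *ᵥ x := key_ineq Sig hpd x w
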